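/- Let m ∈ ℕ and let (ρ_{E∧z})_{z∈{0,1}^m} be a cq-state on Z⊗E with Z = {0,1}^m and positive definite marginal ρ_E. For each nonzero s ∈ {0,1}^m and each bit i ∈ {0,1}, set ρ_{E∧(s·Z=i)} = Σ_{z : s·z = i} ρ_{E∧z} and Λ^s_i = ρ_E^{-1/2} ρ_{E∧(s·Z=i)} ρ_E^{-1/2} (the pretty good measurement associated to ρ_{(s·Z)E}). Then δ(ρ_{ZE}, ω_m ⊗ ρ_E) ≤ √( (1/2) · Σ_{s ≠ 0} d_s ), where d_s = (1/2) · Σ_{i,i' ∈ {0,1}} | tr(Λ^s_i ρ_{E∧(s·Z=i')}) − (1/2)·tr(Λ^s_i ρ_E) | is the trace distance between the classical state obtained by measuring the PGM of ρ_{(s·Z)E} on the E part of ρ_{(s·Z)E} and the product of the uniform one-bit state with the measured marginal. -/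

import Mathlib

open Matrix Kronecker BigOperators Finset ComplexOrder

/-- The positive semidefinite square root of a positive semidefinite matrix
(the definition removed from Mathlib, restored with its old value). -/
noncomputable def Matrix.PosSemidef.sqrt {n : Type*} [Fintype n] [DecidableEq n] {𝕜 : Type*}
    [RCLike 𝕜] {A : Matrix n n 𝕜} (hA : A.PosSemidef) : Matrix n n 𝕜 :=
  (hA.1.eigenvectorUnitary : Matrix n n 𝕜) *
    diagonal (fun i => ((Real.sqrt (hA.1.eigenvalues i) : ℝ) : 𝕜)) *
    (star hA.1.eigenvectorUnitary : Matrix n n 𝕜)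

/-- Bit strings of length `n`. -/
abbrev BS (n : ℕ) := Fin n → Bool

/-- Embedding of a bit into the field with two elements. -/
def toZ2 (b : Bool) : ZMod 2 := if b then 1 else 0

/-- Inner product modulo 2 of two bit strings. -/
def ipBool {n : ℕ} (x y : BS n) : Bool := decide ((∑ i, toZ2 (x i) * toZ2 (y i)) = 1)

/-- Multiplication of a bit string by a matrix over F₂. -/
def mulVecBool {n : ℕ} (L : Matrix (Fin n) (Fin n) (ZMod 2)) (x : BS n) : BS n :=
  fun i => decide ((L.mulVec fun j => toZ2 (x j)) i = 1)

/-- The `deor` extractor associated to a family of matrices over F₂. -/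
def deor {n m : ℕ} (A : Fin m → Matrix (Fin n) (Fin n) (ZMod 2)) (x y : BS n) : BS m :=
  fun i => ipBool (mulVecBool (A i) x) y

/-- Trace norm of a complex matrix: `tr √(SᴴS)`. -/
noncomputable def traceNorm {B : Type*} [Fintype B] [DecidableEq B] (S : Matrix B B ℂ) : ℝ :=
  ((Matrix.posSemidef_conjTranspose_mul_self S).sqrt.trace).re

/-- Trace distance between two matrices. -/
noncomputable def traceDist {B : Type*} [Fintype B] [DecidableEq B] (ρ σ : Matrix B B ℂ) : ℝ :=
  (1/2) * traceNorm (ρ - σ)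

/-- A density matrix: positive semidefinite with unit trace. -/
def IsDensity {B : Type*} [Fintype B] (ρ : Matrix B B ℂ) : Prop :=
  ρ.PosSemidef ∧ ρ.trace = 1

/-- A cq-state given by its family of (subnormalized) conditional operators. -/
def IsCQ {X B : Type*} [Fintype X] [Fintype B] (ρ : X → Matrix B B ℂ) : Prop :=
  (∀ x, (ρ x).PosSemidef) ∧ (∑ x, (ρ x).trace) = 1

/-- The full matrix `Σ_x |x⟩⟨x| ⊗ ρ_{B∧x}` of a cq-state. -/
noncomputable def cqMatrix {X B : Type*} [Fintype X] [DecidableEq X] [Fintype B]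
    (ρ : X → Matrix B B ℂ) : Matrix (X × B) (X × B) ℂ :=
  ∑ x, (Matrix.single x x (1:ℂ)) ⊗ₖ ρ x

/-- Conditional min-entropy of a cq-state: the sup over density matrices σ and reals w with
`ρ_{B∧x} ≤ 2^{-w}·σ` for all `x` (Loewner order), of `w`; `⊥ = -∞` if no such pair exists. -/
noncomputable def qCondHmin {X B : Type*} [Fintype X] [Fintype B]
    (ρ : X → Matrix B B ℂ) : EReal :=
  sSup {z : EReal | ∃ w : ℝ, z = (w : EReal) ∧ ∃ σ : Matrix B B ℂ, σ.PosSemidef ∧ σ.trace = 1 ∧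
    ∀ x, (((2:ℝ) ^ (-w)) • σ - ρ x).PosSemidef}

/-- The maximally mixed state on `m` qubits. -/
noncomputable def mixed (m : ℕ) : Matrix (BS m) (BS m) ℂ := ((2:ℂ)^m)⁻¹ • 1

/-- A finitely supported probability distribution. -/
def IsDist {α : Type*} [Fintype α] (P : α → ℝ) : Prop := (∀ a, 0 ≤ P a) ∧ ∑ a, P a = 1

/-- Total variation distance. -/
noncomputable def TV {α : Type*} [Fintype α] (Q R : α → ℝ) : ℝ := (1/2) * ∑ a, |Q a - R a|

/-- Min-entropy of a distribution. -/
noncomputable def Hmin {X : Type*} [Fintype X] [Nonempty X] (P : X → ℝ) : ℝ :=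
  - Real.logb 2 (⨆ x, P x)

/-- Conditional min-entropy of a joint distribution. -/
noncomputable def HminCond {X Z : Type*} [Fintype X] [Nonempty X] [Fintype Z]
    (P : X → Z → ℝ) : ℝ :=
  - Real.logb 2 (∑ z, ⨆ x, P x z)

/-- `(k1,k2,ε)` X1-strong two-source extractor (no side information). -/
def IsStrongExt (n1 n2 m : ℕ) (Ext : BS n1 → BS n2 → BS m) (k1 k2 ε : ℝ) : Prop :=
  ∀ (P1 : BS n1 → ℝ) (P2 : BS n2 → ℝ), IsDist P1 → IsDist P2 →
    k1 ≤ Hmin P1 → k2 ≤ Hmin P2 →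
    TV (fun p : BS m × BS n1 => ∑ x2, if Ext p.2 x2 = p.1 then P1 p.2 * P2 x2 else 0)
       (fun p : BS m × BS n1 => ((2:ℝ)^m)⁻¹ * P1 p.2) ≤ ε

/-- `(k1,k2,ε)` X1-strong two-source extractor against classical product-type knowledge. -/
def IsStrongExtCPT (n1 n2 m : ℕ) (Ext : BS n1 → BS n2 → BS m) (k1 k2 ε : ℝ) : Prop :=
  ∀ (Z1 Z2 : Type) [Fintype Z1] [Fintype Z2],
    ∀ (P1 : BS n1 → Z1 → ℝ) (P2 : BS n2 → Z2 → ℝ),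
    IsDist (fun p : BS n1 × Z1 => P1 p.1 p.2) →
    IsDist (fun p : BS n2 × Z2 => P2 p.1 p.2) →
    k1 ≤ HminCond P1 → k2 ≤ HminCond P2 →
    TV (fun q : BS m × BS n1 × Z1 × Z2 =>
          ∑ x2, if Ext q.2.1 x2 = q.1 then P1 q.2.1 q.2.2.1 * P2 x2 q.2.2.2 else 0)
       (fun q : BS m × BS n1 × Z1 × Z2 =>
          ((2:ℝ)^m)⁻¹ * P1 q.2.1 q.2.2.1 * ∑ x2, P2 x2 q.2.2.2) ≤ ε

/-- `(k1,k2,ε)` weak two-source extractor against classical product-type knowledge. -/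
def IsWeakExtCPT (n1 n2 m : ℕ) (Ext : BS n1 → BS n2 → BS m) (k1 k2 ε : ℝ) : Prop :=
  ∀ (Z1 Z2 : Type) [Fintype Z1] [Fintype Z2],
    ∀ (P1 : BS n1 → Z1 → ℝ) (P2 : BS n2 → Z2 → ℝ),
    IsDist (fun p : BS n1 × Z1 => P1 p.1 p.2) →
    IsDist (fun p : BS n2 × Z2 => P2 p.1 p.2) →
    k1 ≤ HminCond P1 → k2 ≤ HminCond P2 →
    TV (fun q : BS m × Z1 × Z2 =>
          ∑ x1, ∑ x2, if Ext x1 x2 = q.1 then P1 x1 q.2.1 * P2 x2 q.2.2 else 0)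
       (fun q : BS m × Z1 × Z2 =>
          ((2:ℝ)^m)⁻¹ * (∑ x1, P1 x1 q.2.1) * ∑ x2, P2 x2 q.2.2) ≤ ε

/-- `(k1,k2,ε)` X1-strong two-source extractor against classical knowledge in the Markov model. -/
def IsStrongExtCMarkov (n1 n2 m : ℕ) (Ext : BS n1 → BS n2 → BS m) (k1 k2 ε : ℝ) : Prop :=
  ∀ (C : Type) [Fintype C], ∀ (P : BS n1 → BS n2 → C → ℝ),
    IsDist (fun q : BS n1 × BS n2 × C => P q.1 q.2.1 q.2.2) →
    (∀ x1 x2 c, P x1 x2 c * (∑ x1', ∑ x2', P x1' x2' c)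
        = (∑ x2', P x1 x2' c) * (∑ x1', P x1' x2 c)) →
    k1 ≤ HminCond (fun x1 c => ∑ x2, P x1 x2 c) →
    k2 ≤ HminCond (fun x2 c => ∑ x1, P x1 x2 c) →
    TV (fun q : BS m × BS n1 × C => ∑ x2, if Ext q.2.1 x2 = q.1 then P q.2.1 x2 q.2.2 else 0)
       (fun q : BS m × BS n1 × C => ((2:ℝ)^m)⁻¹ * ∑ x2, P q.2.1 x2 q.2.2) ≤ ε

/-- The output cq-state `ρ_{Ext(X1,X2) X1 C1 C2}` for product-type quantum side information. -/
noncomputable def qStrongOut {n1 n2 m : ℕ} {C1 C2 : Type}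
    [Fintype C1] [Fintype C2]
    (Ext : BS n1 → BS n2 → BS m)
    (ρ1 : BS n1 → Matrix C1 C1 ℂ) (ρ2 : BS n2 → Matrix C2 C2 ℂ) :
    Matrix (BS m × (BS n1 × C1) × C2) (BS m × (BS n1 × C1) × C2) ℂ :=
  ∑ x1, ∑ x2, (Matrix.single (Ext x1 x2) (Ext x1 x2) (1:ℂ)) ⊗ₖ
    (((Matrix.single x1 x1 (1:ℂ)) ⊗ₖ ρ1 x1) ⊗ₖ ρ2 x2)

/-- `(k1,k2,ε)` X1-strong two-source extractor against quantum product-type knowledge. -/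
def IsStrongExtQPT (n1 n2 m : ℕ) (Ext : BS n1 → BS n2 → BS m) (k1 k2 ε : ℝ) : Prop :=
  ∀ (C1 C2 : Type) [Fintype C1] [DecidableEq C1] [Fintype C2] [DecidableEq C2],
    ∀ (ρ1 : BS n1 → Matrix C1 C1 ℂ) (ρ2 : BS n2 → Matrix C2 C2 ℂ),
    IsCQ ρ1 → IsCQ ρ2 →
    (k1 : EReal) ≤ qCondHmin ρ1 → (k2 : EReal) ≤ qCondHmin ρ2 →
    traceDist (qStrongOut Ext ρ1 ρ2) (mixed m ⊗ₖ (cqMatrix ρ1 ⊗ₖ ∑ x2, ρ2 x2)) ≤ ε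

/-- `(k1,k2,ε)` weak two-source extractor against quantum product-type knowledge. -/
def IsWeakExtQPT (n1 n2 m : ℕ) (Ext : BS n1 → BS n2 → BS m) (k1 k2 ε : ℝ) : Prop :=
  ∀ (C1 C2 : Type) [Fintype C1] [DecidableEq C1] [Fintype C2] [DecidableEq C2],
    ∀ (ρ1 : BS n1 → Matrix C1 C1 ℂ) (ρ2 : BS n2 → Matrix C2 C2 ℂ),
    IsCQ ρ1 → IsCQ ρ2 →
    (k1 : EReal) ≤ qCondHmin ρ1 → (k2 : EReal) ≤ qCondHmin ρ2 →
    traceDist (∑ x1, ∑ x2, (Matrix.single (Ext x1 x2) (Ext x1 x2) (1:ℂ)) ⊗ₖ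
        ((ρ1 x1) ⊗ₖ ρ2 x2))
      (mixed m ⊗ₖ ((∑ x1, ρ1 x1) ⊗ₖ ∑ x2, ρ2 x2)) ≤ ε

/-- `(k1,k2,ε)` X1-strong two-source extractor against quantum knowledge in the Markov model,
in decomposed form. -/
def IsStrongExtQMarkov (n1 n2 m : ℕ) (Ext : BS n1 → BS n2 → BS m) (k1 k2 ε : ℝ) : Prop :=
  ∀ (Z C1 C2 : Type) [Fintype Z] [DecidableEq Z]
      [Fintype C1] [DecidableEq C1] [Fintype C2] [DecidableEq C2],
    ∀ (P : Z → ℝ) (ρ1 : Z → BS n1 → Matrix C1 C1 ℂ) (ρ2 : Z → BS n2 → Matrix C2 C2 ℂ),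
    IsDist P → (∀ z, IsCQ (ρ1 z)) → (∀ z, IsCQ (ρ2 z)) →
    (k1 : EReal) ≤ qCondHmin (fun x1 : BS n1 =>
      ∑ z, P z • (((ρ1 z x1) ⊗ₖ ∑ x2, ρ2 z x2) ⊗ₖ Matrix.single z z (1:ℂ))) →
    (k2 : EReal) ≤ qCondHmin (fun x2 : BS n2 =>
      ∑ z, P z • (((∑ x1, ρ1 z x1) ⊗ₖ ρ2 z x2) ⊗ₖ Matrix.single z z (1:ℂ))) →
    traceDist
      (∑ x1, ∑ x2, ∑ z, P z •
        ((Matrix.single (Ext x1 x2) (Ext x1 x2) (1:ℂ)) ⊗ₖ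
          ((Matrix.single x1 x1 (1:ℂ)) ⊗ₖ
            (((ρ1 z x1) ⊗ₖ ρ2 z x2) ⊗ₖ Matrix.single z z (1:ℂ)))))
      (mixed m ⊗ₖ cqMatrix (fun x1 : BS n1 =>
        ∑ z, P z • (((ρ1 z x1) ⊗ₖ ∑ x2, ρ2 z x2) ⊗ₖ Matrix.single z z (1:ℂ))))
      ≤ ε

section sqrtport
open scoped MatrixOrder
variable {n : Type*} [Fintype n] [DecidableEq n] {𝕜 : Type*} [RCLike 𝕜]

lemma Matrix.PosSemidef.sqrt_eq_cfcSqrt {A : Matrix n n 𝕜} (hA : A.PosSemidef) :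
    hA.sqrt = CFC.sqrt A := by
  have h0 : 0 ≤ A := Matrix.nonneg_iff_posSemidef.mpr hA
  rw [CFC.sqrt_eq_real_sqrt A h0, cfcₙ_eq_cfc, Matrix.IsHermitian.cfc_eq hA.1, Matrix.IsHermitian.cfc,
    Unitary.conjStarAlgAut_apply]
  rfl

lemma Matrix.PosSemidef.posSemidef_sqrt {A : Matrix n n 𝕜} (hA : A.PosSemidef) :
    hA.sqrt.PosSemidef := by
  rw [hA.sqrt_eq_cfcSqrt]; exact Matrix.nonneg_iff_posSemidef.mp (CFC.sqrt_nonneg A)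

lemma Matrix.PosSemidef.sqrt_mul_self {A : Matrix n n 𝕜} (hA : A.PosSemidef) :
    hA.sqrt * hA.sqrt = A := by
  rw [hA.sqrt_eq_cfcSqrt]; exact CFC.sqrt_mul_sqrt_self A (Matrix.nonneg_iff_posSemidef.mpr hA)

lemma Matrix.PosSemidef.eq_sqrt_of_sq_eq {A : Matrix n n 𝕜} (hA : A.PosSemidef)
    {B : Matrix n n 𝕜} (hB : B.PosSemidef) (hAB : A ^ 2 = B) : A = hB.sqrt := by
  rw [hB.sqrt_eq_cfcSqrt]
  exact (CFC.sqrt_unique (by rw [← pow_two]; exact hAB) (Matrix.nonneg_iff_posSemidef.mpr hA)).symm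

lemma Matrix.PosSemidef.eq_of_sq_eq_sq {A : Matrix n n 𝕜} (hA : A.PosSemidef)
    {B : Matrix n n 𝕜} (hB : B.PosSemidef) (hAB : A ^ 2 = B ^ 2) : A = B := by
  exact (hA.eq_sqrt_of_sq_eq (hB.pow 2) hAB).trans (hB.eq_sqrt_of_sq_eq (hB.pow 2) rfl).symm

end sqrtport

set_option linter.unusedSectionVars false
set_option linter.unusedTactic false
set_option maxHeartbeats 1000000

section myaux
variable {n : Type*} [Fintype n] [DecidableEq n]

variable {n : Type*} [Fintype n] [DecidableEq n]

lemma psd_trace_re_nonneg {A : Matrix n n ℂ} (hA : A.PosSemidef) : 0 ≤ A.trace.re := by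
  have h : ∀ i, 0 ≤ (A i i).re := by
    intro i
    have h2 := hA.dotProduct_mulVec_nonneg (Pi.single i 1)
    have h3 : star (Pi.single i 1 : n → ℂ) ⬝ᵥ A *ᵥ Pi.single i 1 = A i i := by
      simp [Matrix.mulVec_single, dotProduct, Pi.single_apply, apply_ite, starRingEnd_apply]
    rw [h3] at h2
    exact (Complex.le_def.mp h2).1
  rw [Matrix.trace]
  simpa [Matrix.diag, Complex.re_sum] using Finset.sum_nonneg (fun i _ => h i)

lemma frob_nonneg (A : Matrix n n ℂ) : 0 ≤ ((Aᴴ*A).trace).re :=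
  psd_trace_re_nonneg (Matrix.posSemidef_conjTranspose_mul_self A)

lemma frob_cs (A B : Matrix n n ℂ) :
    ((Aᴴ*B).trace).re ≤ Real.sqrt ((Aᴴ*A).trace).re * Real.sqrt ((Bᴴ*B).trace).re := by
  have habs : ∀ (C D : Matrix n n ℂ), ((Cᴴ*D).trace) = ∑ p : n × n, (starRingEnd ℂ) (C p.1 p.2) * D p.1 p.2 := by
    intro C D
    rw [Matrix.trace]
    rw [Fintype.sum_prod_type]
    simp [Matrix.diag, Matrix.mul_apply, Matrix.conjTranspose_apply]
    rw [Finset.sum_comm]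
  have hAA : ((Aᴴ*A).trace).re = ∑ p : n × n, ‖A p.1 p.2‖^2 := by
    rw [habs, Complex.re_sum]
    congr 1; ext p
    rw [mul_comm, Complex.mul_conj]
    simp [Complex.normSq_eq_norm_sq, ← Complex.ofReal_pow]
  have hBB : ((Bᴴ*B).trace).re = ∑ p : n × n, ‖B p.1 p.2‖^2 := by
    rw [habs, Complex.re_sum]
    congr 1; ext p
    rw [mul_comm, Complex.mul_conj]
    simp [Complex.normSq_eq_norm_sq, ← Complex.ofReal_pow]
  rw [hAA, hBB, habs]
  calc (∑ p : n × n, (starRingEnd ℂ) (A p.1 p.2) * B p.1 p.2).re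
      ≤ ‖∑ p : n × n, (starRingEnd ℂ) (A p.1 p.2) * B p.1 p.2‖ := Complex.re_le_norm _
    _ ≤ ∑ p : n × n, ‖(starRingEnd ℂ) (A p.1 p.2) * B p.1 p.2‖ := norm_sum_le _ _
    _ = ∑ p : n × n, ‖A p.1 p.2‖ * ‖B p.1 p.2‖ := by
        congr 1; ext p; rw [norm_mul, RingHomIsometric.norm_map]
    _ ≤ Real.sqrt (∑ p : n × n, ‖A p.1 p.2‖^2) * Real.sqrt (∑ p : n × n, ‖B p.1 p.2‖^2) :=
        Real.sum_mul_le_sqrt_mul_sqrt _ _ _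


variable {n : Type*} [Fintype n] [DecidableEq n]

lemma exists_polar {S : Matrix n n ℂ} (hS : S.IsHermitian) :
    ∃ V : Matrix n n ℂ, Vᴴ = V ∧ V * V = 1 ∧ ((V*S).trace).re = traceNorm S := by
  set u : Matrix n n ℂ := (hS.eigenvectorUnitary : Matrix n n ℂ) with hu
  have huu : u * star u = 1 := (Matrix.mem_unitaryGroup_iff).mp hS.eigenvectorUnitary.2
  have huu' : star u * u = 1 := (Matrix.mem_unitaryGroup_iff').mp hS.eigenvectorUnitary.2
  set ev : n → ℝ := hS.eigenvalues with hev
  set sgn : n → ℝ := fun i => if ev i < 0 then (-1:ℝ) else 1 with hsgn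
  set dS : Matrix n n ℂ := diagonal (fun i => (sgn i : ℂ)) with hdS
  set dE : Matrix n n ℂ := diagonal (RCLike.ofReal ∘ ev) with hdE
  set dA : Matrix n n ℂ := diagonal (fun i => ((|ev i| : ℝ) : ℂ)) with hdA
  have hspec : S = u * dE * star u := hS.spectral_theorem
  -- general sandwich product identity
  have hsand : ∀ (P Q : Matrix n n ℂ), (u * P * star u) * (u * Q * star u) = u * (P * Q) * star u := by
    intro P Q
    calc (u * P * star u) * (u * Q * star u) = u * P * (star u * u) * (Q * star u) := by
          simp only [Matrix.mul_assoc]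
      _ = u * (P * Q) * star u := by rw [huu']; simp only [Matrix.mul_one, Matrix.mul_assoc]
  have htr : ∀ (P : Matrix n n ℂ), (u * P * star u).trace = P.trace := by
    intro P
    rw [Matrix.trace_mul_cycle, huu', Matrix.one_mul]
  have hdSdS : dS * dS = 1 := by
    rw [hdS, Matrix.diagonal_mul_diagonal]
    have h1 : (fun i => ((sgn i : ℂ)) * ((sgn i : ℂ))) = fun _ => (1:ℂ) := by
      funext i; by_cases h : ev i < 0 <;> simp [hsgn, h]
    rw [h1]
    exact Matrix.diagonal_one
  have hdSdE : dS * dE = dA := by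
    rw [hdS, hdE, hdA, Matrix.diagonal_mul_diagonal]
    have h1 : (fun i => ((sgn i : ℂ)) * (RCLike.ofReal ∘ ev) i) = fun i => ((|ev i| : ℝ) : ℂ) := by
      funext i
      show ((sgn i : ℂ)) * ((ev i : ℝ) : ℂ) = ((|ev i| : ℝ) : ℂ)
      rw [← Complex.ofReal_mul]
      congr 1
      by_cases h : ev i < 0
      · simp [hsgn, h, abs_of_neg h]
      · simp [hsgn, h, abs_of_nonneg (not_lt.mp h)]
    rw [h1]
  have hdAtr : (dA.trace).re = ∑ i, |ev i| := by
    rw [hdA, Matrix.trace_diagonal, Complex.re_sum]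
    simp
  have htrN : traceNorm S = ∑ i, |ev i| := by
    have hX : (u * dA * star u).PosSemidef := by
      have : dA.PosSemidef := by
        rw [hdA]
        refine Matrix.posSemidef_diagonal_iff.mpr (fun i => ?_)
        rw [Complex.zero_le_real]
        exact abs_nonneg _
      simpa [Matrix.star_eq_conjTranspose] using this.mul_mul_conjTranspose_same u
    have hsq : (u * dA * star u) ^ 2 = Sᴴ * S := by
      rw [hS, pow_two, hsand, hspec, hsand]
      congr 2
      rw [hdA, hdE, Matrix.diagonal_mul_diagonal, Matrix.diagonal_mul_diagonal]
      congr 1; funext i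
      simp [← Complex.ofReal_mul, abs_mul_abs_self]
    have := hX.eq_sqrt_of_sq_eq (Matrix.posSemidef_conjTranspose_mul_self S) hsq
    rw [traceNorm, ← this, htr, hdAtr]
  refine ⟨u * dS * star u, ?_, ?_, ?_⟩
  · have hstar : (star fun i => ((sgn i : ℂ))) = fun i => ((sgn i : ℂ)) := by
      funext i
      show star ((sgn i : ℂ)) = ((sgn i : ℝ) : ℂ)
      rw [Complex.star_def, Complex.conj_ofReal]
    have hdSH : dSᴴ = dS := by
      rw [hdS, Matrix.diagonal_conjTranspose, hstar]
    rw [Matrix.conjTranspose_mul, Matrix.conjTranspose_mul, hdSH,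
      ← Matrix.star_eq_conjTranspose, ← Matrix.star_eq_conjTranspose, star_star,
      Matrix.mul_assoc]
  · rw [hsand, hdSdS, Matrix.mul_one, huu]
  · rw [htrN]
    conv_lhs => rw [hspec]
    rw [hsand, hdSdE, htr, hdAtr]

lemma key_bound {S W W' : Matrix n n ℂ} (hS : S.IsHermitian) (hW : W.IsHermitian)
    (hW' : W'.IsHermitian) (h1 : W * W' = 1) (h2 : W' * W = 1) :
    traceNorm S ≤ Real.sqrt ((W*W*(W*W)).trace).re *
      Real.sqrt ((W'*W'*S*(W'*W')*S).trace).re := by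
  obtain ⟨V, hVH, hVV, hVtr⟩ := exists_polar hS
  have hA2H : (W*W*V)ᴴ = V*(W*W) := by
    rw [Matrix.conjTranspose_mul, Matrix.conjTranspose_mul, hVH, hW.eq]
  have hB2H : (V*(W*W))ᴴ = W*W*V := by
    rw [Matrix.conjTranspose_mul, Matrix.conjTranspose_mul, hVH, hW.eq]
  have h4a : ((W*W*V)ᴴ*(W*W*V)).trace = (W*W*(W*W)).trace := by
    rw [hA2H, show (V*(W*W))*(W*W*V) = V*(W*W*(W*W))*V from by simp only [Matrix.mul_assoc],
      Matrix.trace_mul_cycle, hVV, Matrix.one_mul]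
  have h4b : ((V*(W*W))ᴴ*(V*(W*W))).trace = (W*W*(W*W)).trace := by
    rw [hB2H, show (W*W*V)*(V*(W*W)) = W*W*((V*V)*(W*W)) from by simp only [Matrix.mul_assoc],
      hVV, Matrix.one_mul]
  have hW4nonneg : 0 ≤ ((W*W*(W*W)).trace).re := by rw [← h4a]; exact frob_nonneg _
  have hcs2 : ((W*V*W*(W*V*W)).trace).re ≤ ((W*W*(W*W)).trace).re := by
    have e0 : (W*V*W*(W*V*W)).trace = ((W*W*V)ᴴ*(V*(W*W))).trace := by
      rw [hA2H, show W*V*W*(W*V*W) = W*(V*W*(W*V*W)) from by simp only [Matrix.mul_assoc],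
        Matrix.trace_mul_comm]
      congr 1
      simp only [Matrix.mul_assoc]
    calc ((W*V*W*(W*V*W)).trace).re = (((W*W*V)ᴴ*(V*(W*W))).trace).re := by rw [e0]
      _ ≤ Real.sqrt (((W*W*V)ᴴ*(W*W*V)).trace).re *
            Real.sqrt (((V*(W*W))ᴴ*(V*(W*W))).trace).re := frob_cs _ _
      _ = ((W*W*(W*W)).trace).re := by
          rw [h4a, h4b, Real.mul_self_sqrt hW4nonneg]
  set A : Matrix n n ℂ := W * V * W with hA
  set B : Matrix n n ℂ := W' * S * W' with hB
  have hAH : Aᴴ = A := by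
    rw [hA, Matrix.conjTranspose_mul, Matrix.conjTranspose_mul, hVH, hW.eq, Matrix.mul_assoc]
  have hBH : Bᴴ = B := by
    rw [hB, Matrix.conjTranspose_mul, Matrix.conjTranspose_mul, hS.eq, hW'.eq, Matrix.mul_assoc]
  have htrAB : ((Aᴴ*B).trace) = ((V*S).trace) := by
    rw [hAH, hA, hB,
      show W*V*W*(W'*S*W') = (W*V*((W*W')*S))*W' from by simp only [Matrix.mul_assoc],
      Matrix.trace_mul_comm,
      show W' * (W*V*((W*W')*S)) = (W'*W)*(V*((W*W')*S)) from by simp only [Matrix.mul_assoc],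
      h1, h2, Matrix.one_mul, Matrix.one_mul]
  have hstep1 : traceNorm S ≤ Real.sqrt ((Aᴴ*A).trace).re * Real.sqrt ((Bᴴ*B).trace).re := by
    rw [← hVtr, ← htrAB]
    exact frob_cs A B
  have hAA : ((Aᴴ*A).trace) = ((W*V*W*(W*V*W)).trace) := by rw [hAH]
  have hBB : ((Bᴴ*B).trace) = ((W'*W'*S*(W'*W')*S).trace) := by
    rw [hBH, hB,
      show (W'*S*W')*(W'*S*W') = (W'*S)*(W'*(W'*(S*W'))) from by simp only [Matrix.mul_assoc],
      Matrix.trace_mul_comm]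
    congr 1
    simp only [Matrix.mul_assoc]
  calc traceNorm S ≤ Real.sqrt ((Aᴴ*A).trace).re * Real.sqrt ((Bᴴ*B).trace).re := hstep1
    _ ≤ Real.sqrt ((W*W*(W*W)).trace).re * Real.sqrt ((Bᴴ*B).trace).re := by
        apply mul_le_mul_of_nonneg_right _ (Real.sqrt_nonneg _)
        apply Real.sqrt_le_sqrt
        rw [hAA]
        exact hcs2
    _ = Real.sqrt ((W*W*(W*W)).trace).re * Real.sqrt ((W'*W'*S*(W'*W')*S).trace).re := by
        rw [hBB]
lemma sqrt_posDef {A : Matrix n n ℂ} (hA : A.PosDef) : (hA.posSemidef.sqrt).PosDef := by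
  have hpsd : (hA.posSemidef.sqrt).PosSemidef := hA.posSemidef.posSemidef_sqrt
  refine Matrix.PosDef.of_dotProduct_mulVec_pos hpsd.1 (fun x hx => ?_)
  rcases (hpsd.dotProduct_mulVec_nonneg x).lt_or_eq with hlt | heq
  · exact hlt
  · exfalso
    have hRx : hA.posSemidef.sqrt *ᵥ x = 0 := (hpsd.dotProduct_mulVec_zero_iff x).mp heq.symm
    have hAx : A *ᵥ x = 0 := by
      rw [← hA.posSemidef.sqrt_mul_self, ← Matrix.mulVec_mulVec, hRx, Matrix.mulVec_zero]
    have h2 := hA.dotProduct_mulVec_pos hx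
    rw [hAx, dotProduct_zero] at h2
    exact lt_irrefl _ h2


end myaux

section myblocks
variable {Z E : Type*} [Fintype Z] [DecidableEq Z] [Fintype E] [DecidableEq E]

variable {Z E : Type*} [Fintype Z] [DecidableEq Z] [Fintype E] [DecidableEq E]

noncomputable def BD (f : Z → Matrix E E ℂ) : Matrix (Z × E) (Z × E) ℂ :=
  ∑ z, (Matrix.single z z (1:ℂ)) ⊗ₖ f z

lemma BD_apply (f : Z → Matrix E E ℂ) (p q : Z × E) :
    BD f p q = if p.1 = q.1 then f p.1 p.2 q.2 else 0 := by
  rw [BD, Matrix.sum_apply]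
  have h : ∀ z, ((Matrix.single z z (1:ℂ)) ⊗ₖ f z) p q
      = (if z = p.1 ∧ z = q.1 then (1:ℂ) else 0) * f z p.2 q.2 := by
    intro z
    rw [Matrix.kroneckerMap_apply]
    congr 1
  simp_rw [h]
  rcases eq_or_ne p.1 q.1 with he | he
  · rw [Finset.sum_eq_single p.1]
    · simp [he]
    · intro w _ hw
      rw [if_neg, zero_mul]
      rintro ⟨h1, -⟩
      exact hw h1
    · simp
  · rw [if_neg he, Finset.sum_eq_zero]
    intro w _
    rcases eq_or_ne w p.1 with rfl | hw
    · simp [he]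
    · rw [if_neg, zero_mul]
      rintro ⟨h1, -⟩
      exact hw h1

lemma BD_mul (f g : Z → Matrix E E ℂ) : BD f * BD g = BD (fun z => f z * g z) := by
  ext p q
  rw [Matrix.mul_apply, BD_apply]
  rw [Fintype.sum_prod_type]
  simp_rw [BD_apply]
  rcases eq_or_ne p.1 q.1 with he | he
  · rw [if_pos he, Matrix.mul_apply, Finset.sum_eq_single p.1]
    · simp [he]
    · intro w _ hw
      simp [Ne.symm hw]
    · simp
  · rw [if_neg he, Finset.sum_eq_zero]
    intro w _
    rcases eq_or_ne p.1 w with rfl | hw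
    · simp [he]
    · rw [Finset.sum_eq_zero]
      intro x _
      rw [if_neg hw, zero_mul]

lemma BD_trace (f : Z → Matrix E E ℂ) : (BD f).trace = ∑ z, (f z).trace := by
  rw [BD, Matrix.trace_sum]
  congr 1; funext z
  rw [Matrix.trace_kronecker]
  have : (Matrix.single z z (1:ℂ)).trace = 1 := by
    exact Matrix.trace_single_eq_same z (1:ℂ)
  rw [this, one_mul]

lemma BD_herm {f : Z → Matrix E E ℂ} (hf : ∀ z, (f z).IsHermitian) : (BD f).IsHermitian := by
  refine Matrix.IsHermitian.ext fun p q => ?_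
  rw [BD_apply, BD_apply]
  rcases eq_or_ne q.1 p.1 with he | he
  · rw [if_pos he, if_pos he.symm, he, ← Matrix.conjTranspose_apply, (hf p.1).eq]
  · rw [if_neg he, if_neg (Ne.symm he), star_zero]

lemma BD_sub (f g : Z → Matrix E E ℂ) : BD f - BD g = BD (fun z => f z - g z) := by
  ext p q
  rw [Matrix.sub_apply, BD_apply, BD_apply, BD_apply]
  rcases eq_or_ne p.1 q.1 with he | he <;> simp [he]

lemma BD_one : BD (fun _ : Z => (1 : Matrix E E ℂ)) = 1 := by
  ext p q
  rw [BD_apply]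
  by_cases he : p.1 = q.1 <;> by_cases he2 : p.2 = q.2 <;>
    simp [Matrix.one_apply, Prod.ext_iff, he, he2]

def chr {m : ℕ} (s z : BS m) : ℂ := if ipBool s z then -1 else 1

lemma toZ2_not (b : Bool) : toZ2 (!b) = toZ2 b + 1 := by cases b <;> decide
lemma toZ2_xor (a b : Bool) : toZ2 (xor a b) = toZ2 a + toZ2 b := by cases a <;> cases b <;> decide

lemma ipBool_comm {m : ℕ} (s z : BS m) : ipBool s z = ipBool z s := by
  unfold ipBool
  congr 1
  rw [eq_iff_iff]
  constructor <;> intro h <;> rw [← h] <;> exact Finset.sum_congr rfl (fun i _ => mul_comm _ _)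

lemma ipBool_flip {m : ℕ} (s z : BS m) (i0 : Fin m) (hs : s i0 = true) :
    ipBool s (Function.update z i0 (!z i0)) = !(ipBool s z) := by
  set F : Fin m → ZMod 2 := fun i => toZ2 (s i) * toZ2 (z i) with hF
  have hfun : (fun i => toZ2 (s i) * toZ2 (Function.update z i0 (!z i0) i))
      = Function.update F i0 (F i0 + 1) := by
    funext i
    rcases eq_or_ne i i0 with rfl | h
    · rw [Function.update_self, Function.update_self, toZ2_not, mul_add, hF]
      simp [hs, toZ2]
    · rw [Function.update_of_ne h, Function.update_of_ne h]
  have hsum : (∑ i, toZ2 (s i) * toZ2 (Function.update z i0 (!z i0) i)) = (∑ i, F i) + 1 := by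
    rw [hfun, Finset.sum_update_of_mem (Finset.mem_univ i0),
      ← Finset.add_sum_erase _ F (Finset.mem_univ i0), Finset.sdiff_singleton_eq_erase, hF]
    ring
  unfold ipBool
  rw [hsum]
  have : ∀ x : ZMod 2, decide (x + 1 = 1) = !(decide (x = 1)) := by decide
  exact this _

lemma ipBool_add {m : ℕ} (s z z' : BS m) :
    ipBool s (fun i => xor (z i) (z' i)) = xor (ipBool s z) (ipBool s z') := by
  unfold ipBool
  have hsum : (∑ i, toZ2 (s i) * toZ2 (xor (z i) (z' i)))
      = (∑ i, toZ2 (s i) * toZ2 (z i)) + ∑ i, toZ2 (s i) * toZ2 (z' i) := by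
    rw [← Finset.sum_add_distrib]
    exact Finset.sum_congr rfl (fun i _ => by rw [toZ2_xor, mul_add])
  rw [hsum]
  have : ∀ x y : ZMod 2, decide (x + y = 1) = xor (decide (x = 1)) (decide (y = 1)) := by decide
  exact this _ _

lemma ipBool_zero {m : ℕ} (z : BS m) : ipBool (fun _ => false) z = false := by
  unfold ipBool
  simp [toZ2]

lemma chr_zero {m : ℕ} (z : BS m) : chr (fun _ => false) z = 1 := by
  rw [chr, ipBool_zero]
  simp

lemma chr_mul {m : ℕ} (s z z' : BS m) :
    chr s z * chr s z' = chr s (fun i => xor (z i) (z' i)) := by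
  rw [chr, chr, chr, ipBool_add]
  cases hb : ipBool s z <;> cases hb' : ipBool s z' <;> simp

lemma chr_sum_zero {m : ℕ} (s : BS m) (hs : s ≠ fun _ => false) :
    ∑ z : BS m, chr s z = 0 := by
  obtain ⟨i0, hi0⟩ := Function.ne_iff.mp hs
  have hsi0 : s i0 = true := by
    cases h : s i0
    · exact absurd h hi0
    · rfl
  set σ : BS m ≃ BS m :=
    ⟨fun z => Function.update z i0 (!z i0), fun z => Function.update z i0 (!z i0),
     fun z => by simp [Function.update_idem], fun z => by simp [Function.update_idem]⟩ with hσ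
  have h1 : ∑ z : BS m, chr s z = ∑ z : BS m, chr s (σ z) := (Equiv.sum_comp σ (chr s)).symm
  have h2 : ∀ z, chr s (σ z) = - chr s z := by
    intro z
    show chr s (Function.update z i0 (!z i0)) = - chr s z
    rw [chr, chr, ipBool_flip s z i0 hsi0]
    cases hb : ipBool s z <;> simp
  rw [funext h2] at h1
  rw [Finset.sum_neg_distrib] at h1
  linear_combination h1 / 2

lemma chr_orth {m : ℕ} (z z' : BS m) (h : z ≠ z') :
    ∑ s : BS m, chr s z * chr s z' = 0 := by
  have hw : (fun i => xor (z i) (z' i)) ≠ fun _ => false := by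
    obtain ⟨i, hi⟩ := Function.ne_iff.mp h
    intro hc
    have h3 := congrFun hc i
    revert h3 hi
    cases z i <;> cases z' i <;> simp
  calc ∑ s : BS m, chr s z * chr s z' = ∑ s : BS m, chr (fun i => xor (z i) (z' i)) s := by
        refine Finset.sum_congr rfl (fun s _ => ?_)
        rw [chr_mul, chr, chr, ipBool_comm]
    _ = 0 := chr_sum_zero _ hw

lemma chr_self {m : ℕ} (s z : BS m) : chr s z * chr s z = 1 := by
  rw [chr]; cases ipBool s z <;> simp

end myblocks

theorem stmt6 {m : ℕ} {E : Type} [Fintype E] [DecidableEq E]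
    (ρ : BS m → Matrix E E ℂ) (hρ : IsCQ ρ) (hE : (∑ z, ρ z).PosDef) :
    traceDist (cqMatrix ρ) (mixed m ⊗ₖ ∑ z, ρ z)
      ≤ Real.sqrt ((1/2) * ∑ s ∈ Finset.univ.filter (fun s : BS m => s ≠ (fun _ => false)),
          ((1/2) * ∑ i : Bool, ∑ i' : Bool,
            |(Matrix.trace
                (((hE.posSemidef.sqrt)⁻¹ *
                    (∑ z ∈ Finset.univ.filter (fun z : BS m => ipBool s z = i), ρ z) *
                  (hE.posSemidef.sqrt)⁻¹) *
                 (∑ z ∈ Finset.univ.filter (fun z : BS m => ipBool s z = i'), ρ z))).re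
              - (1/2) * (Matrix.trace
                (((hE.posSemidef.sqrt)⁻¹ *
                    (∑ z ∈ Finset.univ.filter (fun z : BS m => ipBool s z = i), ρ z) *
                  (hE.posSemidef.sqrt)⁻¹) * (∑ z, ρ z))).re|)) := by
    classical
  set ρE : Matrix E E ℂ := ∑ z, ρ z with hρE
  set R : Matrix E E ℂ := hE.posSemidef.sqrt with hR
  set M : Matrix E E ℂ := R⁻¹ with hM
  have hRpd : R.PosDef := sqrt_posDef hE
  have hMpd : M.PosDef := hRpd.inv
  set Q : Matrix E E ℂ := hRpd.posSemidef.sqrt with hQ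
  have hQpd : Q.PosDef := sqrt_posDef hRpd
  set Q' : Matrix E E ℂ := hMpd.posSemidef.sqrt with hQ'
  have hQsq : Q * Q = R := hRpd.posSemidef.sqrt_mul_self
  have hQ'sq : Q' * Q' = M := hMpd.posSemidef.sqrt_mul_self
  have hRsq : R * R = ρE := hE.posSemidef.sqrt_mul_self
  have hQdet : IsUnit Q.det := (Matrix.isUnit_iff_isUnit_det Q).mp hQpd.isUnit
  have hQ'eq : Q' = Q⁻¹ := by
    apply Matrix.PosSemidef.eq_of_sq_eq_sq hMpd.posSemidef.posSemidef_sqrt hQpd.inv.posSemidef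
    rw [pow_two, pow_two, hQ'sq, ← Matrix.mul_inv_rev, hQsq]
  have hQQ' : Q * Q' = 1 := by rw [hQ'eq]; exact Matrix.mul_nonsing_inv Q hQdet
  have hQ'Q : Q' * Q = 1 := by rw [hQ'eq]; exact Matrix.nonsing_inv_mul Q hQdet
  have hQH : Q.IsHermitian := hQpd.isHermitian
  have hQ'H : Q'.IsHermitian := hMpd.posSemidef.posSemidef_sqrt.1
  have hρEH : ρE.IsHermitian := hE.isHermitian
  have hstar2 : star (((2:ℂ)^m)⁻¹) = ((2:ℂ)^m)⁻¹ := by simp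
  set D : BS m → Matrix E E ℂ := fun z => ρ z - ((2:ℂ)^m)⁻¹ • ρE with hD
  have hDH : ∀ z, (D z).IsHermitian := by
    intro z
    apply Matrix.IsHermitian.sub (hρ.1 z).1
    show ((((2:ℂ)^m)⁻¹ • ρE))ᴴ = _
    rw [Matrix.conjTranspose_smul, hρEH.eq, hstar2]
  have hmix : mixed m ⊗ₖ ρE = BD (fun _ : BS m => ((2:ℂ)^m)⁻¹ • ρE) := by
    ext p q
    rw [Matrix.kroneckerMap_apply, BD_apply, mixed, Matrix.smul_apply, Matrix.one_apply]
    rcases eq_or_ne p.1 q.1 with he | he <;> simp [he]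
  have hSdef : cqMatrix ρ - mixed m ⊗ₖ ρE = BD D := by
    rw [show cqMatrix ρ = BD ρ from rfl, hmix, BD_sub]
  have hSH : (BD D).IsHermitian := BD_herm hDH
  set W : Matrix (BS m × E) (BS m × E) ℂ := BD (fun _ : BS m => Q) with hW
  set W' : Matrix (BS m × E) (BS m × E) ℂ := BD (fun _ : BS m => Q') with hW'
  have hWH : W.IsHermitian := BD_herm (fun _ => hQH)
  have hW'H : W'.IsHermitian := BD_herm (fun _ => hQ'H)
  have hWW' : W * W' = 1 := by
    rw [hW, hW', BD_mul, show (fun _ : BS m => Q * Q') = fun _ => (1:Matrix E E ℂ) from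
      funext (fun _ => hQQ'), BD_one]
  have hW'W : W' * W = 1 := by
    rw [hW, hW', BD_mul, show (fun _ : BS m => Q' * Q) = fun _ => (1:Matrix E E ℂ) from
      funext (fun _ => hQ'Q), BD_one]
  have hkey := key_bound hSH hWH hW'H hWW' hW'W
  have hcard : (Finset.univ : Finset (BS m)).card = 2^m := by
    rw [Finset.card_univ, Fintype.card_fun]
    simp
  have hρEtr : ρE.trace = 1 := by rw [hρE, Matrix.trace_sum]; exact hρ.2
  have hW4 : ((W*W*(W*W)).trace).re = (2^m : ℝ) := by
    have hWW : W * W = BD (fun _ : BS m => R) := by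
      rw [hW, BD_mul]; exact congrArg BD (funext fun _ => hQsq)
    rw [hWW, BD_mul, show (fun _ : BS m => R * R) = fun _ => ρE from funext fun _ => hRsq,
      BD_trace, Finset.sum_const, hρEtr, hcard, nsmul_eq_mul, mul_one,
      show (((2^m : ℕ)) : ℂ) = (((2^m : ℝ)) : ℂ) from by push_cast; ring, Complex.ofReal_re]
  have hW'2 : W' * W' = BD (fun _ : BS m => M) := by
    rw [hW', BD_mul]; exact congrArg BD (funext fun _ => hQ'sq)
  have hWS : W'*W'*(BD D)*(W'*W')*(BD D) = BD (fun z => M * D z * M * D z) := by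
    rw [hW'2, BD_mul, BD_mul, BD_mul]
  set t : BS m → ℝ := fun z => ((M * D z * M * D z).trace).re with ht
  have hTr : ((W'*W'*(BD D)*(W'*W')*(BD D)).trace).re = ∑ z, t z := by
    rw [hWS, BD_trace, Complex.re_sum]
  -- Parseval
  set Dh : BS m → Matrix E E ℂ := fun s => ∑ z, chr s z • D z with hDh
  set g : BS m → ℝ := fun s => ((M * Dh s * M * Dh s).trace).re with hg
  have hexp : ∀ s, (M * Dh s * M * Dh s).trace
      = ∑ z, ∑ z', (chr s z * chr s z') * (M * D z * M * D z').trace := by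
    intro s
    simp only [hDh]
    simp only [Matrix.mul_sum, Matrix.sum_mul, Matrix.mul_smul, Matrix.smul_mul,
      Matrix.trace_sum, Matrix.trace_smul, smul_smul, smul_eq_mul, Finset.mul_sum]
    rw [Finset.sum_comm]
    exact Finset.sum_congr rfl fun a _ => Finset.sum_congr rfl fun b _ => by ring
  have hparsC : ∑ s, (M * Dh s * M * Dh s).trace
      = (2^m : ℂ) * ∑ z, (M * D z * M * D z).trace := by
    simp_rw [hexp]
    rw [Finset.sum_comm]
    rw [Finset.mul_sum]
    refine Finset.sum_congr rfl (fun z _ => ?_)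
    rw [Finset.sum_comm]
    rw [Finset.sum_eq_single z]
    · rw [← Finset.sum_mul, Finset.sum_congr rfl (fun s _ => chr_self s z), Finset.sum_const,
        hcard]
      push_cast
      simp [mul_comm]
    · intro z' _ hz'
      rw [← Finset.sum_mul, chr_orth z z' (Ne.symm hz'), zero_mul]
    · simp
  have hpars : ∑ s, g s = 2^m * ∑ z, t z := by
    simp only [hg, ht]
    have h2 : (∑ s, (M * Dh s * M * Dh s).trace).re
        = ((2^m : ℂ) * ∑ z, (M * D z * M * D z).trace).re := by rw [hparsC]
    rw [Complex.re_sum] at h2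
    rw [h2, show ((2:ℂ)^m) = (((2^m : ℝ)) : ℂ) by push_cast; ring, Complex.re_ofReal_mul,
      Complex.re_sum]
  have hDh0 : Dh (fun _ => false) = 0 := by
    simp only [hDh]
    have h1 : ∀ z : BS m, chr (fun _ => false) z • D z = D z := by
      intro z; rw [chr_zero, one_smul]
    rw [funext h1]
    simp only [hD]
    rw [Finset.sum_sub_distrib, ← hρE, Finset.sum_const, hcard,
      ← Nat.cast_smul_eq_nsmul ℂ, smul_smul]
    push_cast
    rw [mul_inv_cancel₀ (by positivity), one_smul, sub_self]
  have hg0 : g (fun _ => false) = 0 := by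
    simp only [hg, hDh0]
    simp
  have hfilter : ∑ s ∈ Finset.univ.filter (fun s : BS m => s ≠ (fun _ => false)), g s
      = 2^m * ∑ z, t z := by
    have h0 := Finset.sum_filter_add_sum_filter_not Finset.univ
      (fun s : BS m => s ≠ (fun _ => false)) g
    have h1 : Finset.univ.filter (fun s : BS m => ¬ s ≠ (fun _ => false)) = {fun _ => false} := by
      ext s; simp
    rw [h1, Finset.sum_singleton, hg0, add_zero] at h0
    rw [h0, hpars]
  -- per-s bound
  have hper : ∀ s : BS m, s ≠ (fun _ => false) → g s ≤ 2 *
      ((1/2) * ∑ i : Bool, ∑ i' : Bool,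
        |((M * (∑ z ∈ Finset.univ.filter (fun z : BS m => ipBool s z = i), ρ z) * M *
            (∑ z ∈ Finset.univ.filter (fun z : BS m => ipBool s z = i'), ρ z)).trace).re
          - (1/2) * ((M * (∑ z ∈ Finset.univ.filter (fun z : BS m => ipBool s z = i), ρ z) * M *
            ρE).trace).re|) := by
    intro s hs
    simp only [Fintype.sum_bool]
    set Pf : Matrix E E ℂ := ∑ z ∈ Finset.univ.filter (fun z : BS m => ipBool s z = false), ρ z
      with hPf
    set Pt : Matrix E E ℂ := ∑ z ∈ Finset.univ.filter (fun z : BS m => ipBool s z = true), ρ z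
      with hPt
    have hPsum : Pf + Pt = ρE := by
      rw [hPf, hPt, hρE,
        ← Finset.sum_filter_add_sum_filter_not Finset.univ (fun z : BS m => ipBool s z = false)]
      congr 1
      apply Finset.sum_congr _ (fun _ _ => rfl)
      apply Finset.filter_congr
      intro z _
      simp
    have hDhs : Dh s = Pf - Pt := by
      simp only [hDh]
      have h1 : ∀ z : BS m, chr s z • D z
          = (if ipBool s z = true then -(ρ z) else ρ z) - chr s z • (((2:ℂ)^m)⁻¹ • ρE) := by
        intro z
        simp only [hD]
        rw [smul_sub, chr]
        cases h : ipBool s z <;> simp [h]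
      rw [funext h1, Finset.sum_sub_distrib, ← Finset.sum_smul, chr_sum_zero s hs, zero_smul,
        sub_zero, Finset.sum_ite]
      have h2 : Finset.univ.filter (fun z : BS m => ¬ ipBool s z = true)
          = Finset.univ.filter (fun z : BS m => ipBool s z = false) := by
        apply Finset.filter_congr; intro z _; simp
      rw [h2, Finset.sum_neg_distrib, add_comm, ← sub_eq_add_neg, hPf, hPt]
    have hgs : g s = ((M*Pf*M*Pf).trace).re - ((M*Pf*M*Pt).trace).re
        - ((M*Pt*M*Pf).trace).re + ((M*Pt*M*Pt).trace).re := by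
      simp only [hg, hDhs]
      simp only [Matrix.mul_sub, Matrix.sub_mul, Matrix.trace_sub, Complex.sub_re]
      ring
    have hbt : ((M*Pt*M*ρE).trace).re = ((M*Pt*M*Pf).trace).re + ((M*Pt*M*Pt).trace).re := by
      rw [← hPsum, Matrix.mul_add, Matrix.trace_add, Complex.add_re]
    have hbf : ((M*Pf*M*ρE).trace).re = ((M*Pf*M*Pf).trace).re + ((M*Pf*M*Pt).trace).re := by
      rw [← hPsum, Matrix.mul_add, Matrix.trace_add, Complex.add_re]
    rw [hgs, hbt, hbf]
    generalize ((M*Pf*M*Pf).trace).re = x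
    generalize ((M*Pf*M*Pt).trace).re = y
    generalize ((M*Pt*M*Pf).trace).re = u
    generalize ((M*Pt*M*Pt).trace).re = v
    rw [show u - 1/2*(u+v) = -(v - 1/2*(u+v)) from by ring,
      show y - 1/2*(x+y) = -(x - 1/2*(x+y)) from by ring, abs_neg, abs_neg]
    have k1 := le_abs_self (x - 1/2*(x+y))
    have k2 := le_abs_self (v - 1/2*(u+v))
    linarith
  -- final assembly
  rw [hW4, hTr] at hkey
  calc traceDist (cqMatrix ρ) (mixed m ⊗ₖ ρE)
      = (1/2) * traceNorm (BD D) := by rw [traceDist, hSdef]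
    _ ≤ (1/2) * (Real.sqrt ((2^m:ℝ)) * Real.sqrt (∑ z, t z)) := by
        refine mul_le_mul_of_nonneg_left hkey (by norm_num)
    _ = (1/2) * Real.sqrt ((2^m:ℝ) * ∑ z, t z) := by rw [Real.sqrt_mul (by positivity)]
    _ = (1/2) * Real.sqrt (∑ s ∈ Finset.univ.filter (fun s : BS m => s ≠ (fun _ => false)), g s)
        := by rw [hfilter]
    _ ≤ (1/2) * Real.sqrt (∑ s ∈ Finset.univ.filter (fun s : BS m => s ≠ (fun _ => false)),
          2 * ((1/2) * ∑ i : Bool, ∑ i' : Bool,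
          |((M * (∑ z ∈ Finset.univ.filter (fun z : BS m => ipBool s z = i), ρ z) * M *
              (∑ z ∈ Finset.univ.filter (fun z : BS m => ipBool s z = i'), ρ z)).trace).re
            - (1/2) * ((M * (∑ z ∈ Finset.univ.filter (fun z : BS m => ipBool s z = i), ρ z) * M *
              ρE).trace).re|)) := by
        refine mul_le_mul_of_nonneg_left (Real.sqrt_le_sqrt ?_) (by norm_num)
        refine Finset.sum_le_sum (fun s hs => hper s ?_)
        exact (Finset.mem_filter.mp hs).2
    _ = Real.sqrt ((1/2) * ∑ s ∈ Finset.univ.filter (fun s : BS m => s ≠ (fun _ => false)),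
          ((1/2) * ∑ i : Bool, ∑ i' : Bool,
          |((M * (∑ z ∈ Finset.univ.filter (fun z : BS m => ipBool s z = i), ρ z) * M *
              (∑ z ∈ Finset.univ.filter (fun z : BS m => ipBool s z = i'), ρ z)).trace).re
            - (1/2) * ((M * (∑ z ∈ Finset.univ.filter (fun z : BS m => ipBool s z = i), ρ z) * M *
              ρE).trace).re|)) := by
        rw [← Finset.mul_sum,
          show (1/2:ℝ) * ∑ s ∈ Finset.univ.filter (fun s : BS m => s ≠ (fun _ => false)),
            ((1/2) * ∑ i : Bool, ∑ i' : Bool,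
            |((M * (∑ z ∈ Finset.univ.filter (fun z : BS m => ipBool s z = i), ρ z) * M *
                (∑ z ∈ Finset.univ.filter (fun z : BS m => ipBool s z = i'), ρ z)).trace).re
              - (1/2) * ((M * (∑ z ∈ Finset.univ.filter (fun z : BS m => ipBool s z = i), ρ z) * M *
                ρE).trace).re|)
            = (1/2)^2 * (2 * ∑ s ∈ Finset.univ.filter (fun s : BS m => s ≠ (fun _ => false)),
            ((1/2) * ∑ i : Bool, ∑ i' : Bool,
            |((M * (∑ z ∈ Finset.univ.filter (fun z : BS m => ipBool s z = i), ρ z) * M *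
                (∑ z ∈ Finset.univ.filter (fun z : BS m => ipBool s z = i'), ρ z)).trace).re
              - (1/2) * ((M * (∑ z ∈ Finset.univ.filter (fun z : BS m => ipBool s z = i), ρ z) * M *
                ρE).trace).re|)) from by ring,
          Real.sqrt_mul (sq_nonneg _), Real.sqrt_sq (by norm_num)]
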